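/- Let U ⊆ ℝ² be open with coordinates (u,v), and let g₁₁, g₂₂, g*₁₁, g*₂₂, k₁, k₂ : U → ℝ be smooth with g₁₁, g₂₂, g*₁₁, g*₂₂ > 0 and k₁ − k₂ nowhere zero, satisfying the Codazzi equations of the pair of surfaces M, M* with swapped principal curvatures: (k₁)_v = ((k₂−k₁)/2)(log g₁₁)_v, (k₂)_u = ((k₁−k₂)/2)(log g₂₂)_u, (k₂)_v = ((k₁−k₂)/2)(log g*₁₁)_v, and (k₁)_u = ((k₂−k₁)/2)(log g*₂₂)_u. Then ∂_v( g₁₁ g*₁₁ (k₁−k₂)² ) = 0 and ∂_u( g₂₂ g*₂₂ (k₁−k₂)² ) = 0 on U; that is, g₁₁g*₁₁(k₁−k₂)² is a function of u alone and g₂₂g*₂₂(k₁−k₂)² is a function of v alone. -/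

import Mathlib

/-- Partial derivative in the `u`-direction of a function on `ℝ²`. -/
noncomputable def pu (f : ℝ × ℝ → ℝ) (p : ℝ × ℝ) : ℝ := fderiv ℝ f p (1, 0)

/-- Partial derivative in the `v`-direction of a function on `ℝ²`. -/
noncomputable def pv (f : ℝ × ℝ → ℝ) (p : ℝ × ℝ) : ℝ := fderiv ℝ f p (0, 1)

lemma key (f g a b : ℝ × ℝ → ℝ) (p w : ℝ × ℝ)
    (hf : DifferentiableAt ℝ f p) (hg : DifferentiableAt ℝ g p)
    (ha : DifferentiableAt ℝ a p) (hb : DifferentiableAt ℝ b p)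
    (hf0 : f p ≠ 0) (hg0 : g p ≠ 0) (hd0 : a p - b p ≠ 0)
    (h1 : fderiv ℝ a p w = (b p - a p) / 2 * fderiv ℝ (fun q => Real.log (f q)) p w)
    (h2 : fderiv ℝ b p w = (a p - b p) / 2 * fderiv ℝ (fun q => Real.log (g q)) p w) :
    fderiv ℝ (fun q => f q * g q * (a q - b q) ^ 2) p w = 0 := by
  have hlf : fderiv ℝ (fun q => Real.log (f q)) p w = (f p)⁻¹ * fderiv ℝ f p w := by
    rw [(hf.hasFDerivAt.log hf0).fderiv]; simp
  have hlg : fderiv ℝ (fun q => Real.log (g q)) p w = (g p)⁻¹ * fderiv ℝ g p w := by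
    rw [(hg.hasFDerivAt.log hg0).fderiv]; simp
  have hab : DifferentiableAt ℝ (fun q => a q - b q) p := ha.sub hb
  have hfun : (fun q => (a q - b q) ^ 2) = fun q => (a q - b q) * (a q - b q) := by
    funext q; ring
  have hsq : DifferentiableAt ℝ (fun q => (a q - b q) ^ 2) p := by
    rw [hfun]; exact hab.mul hab
  have hdsq : fderiv ℝ (fun q => (a q - b q) ^ 2) p w
      = 2 * (a p - b p) * (fderiv ℝ a p w - fderiv ℝ b p w) := by
    rw [hfun, fderiv_fun_mul hab hab, fderiv_fun_sub ha hb]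
    simp only [ContinuousLinearMap.add_apply, ContinuousLinearMap.smul_apply,
      ContinuousLinearMap.sub_apply, smul_eq_mul]
    ring
  rw [fderiv_fun_mul (show DifferentiableAt ℝ (fun q => f q * g q) p from hf.mul hg) hsq, fderiv_fun_mul hf hg]
  rw [h1, h2, hlf, hlg] at hdsq
  simp only [ContinuousLinearMap.add_apply, ContinuousLinearMap.smul_apply, smul_eq_mul]
  rw [hdsq]
  field_simp
  ring

/-- for a pair of surfaces `M, M*` in common curvature-line coordinates
with swapped principal curvatures, the four Codazzi equations imply
`∂_v(g₁₁g*₁₁(k₁-k₂)²) = 0` and `∂_u(g₂₂g*₂₂(k₁-k₂)²) = 0`, i.e. `g₁₁g*₁₁(k₁-k₂)²`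
depends only on `u` and `g₂₂g*₂₂(k₁-k₂)²` depends only on `v`. -/
theorem codazzi_pair_separated_invariants
    (U : Set (ℝ × ℝ)) (hU : IsOpen U)
    (g₁₁ g₂₂ gs₁₁ gs₂₂ k₁ k₂ : ℝ × ℝ → ℝ)
    (hg₁₁ : ContDiffOn ℝ (⊤ : ℕ∞) g₁₁ U) (hg₂₂ : ContDiffOn ℝ (⊤ : ℕ∞) g₂₂ U)
    (hgs₁₁ : ContDiffOn ℝ (⊤ : ℕ∞) gs₁₁ U) (hgs₂₂ : ContDiffOn ℝ (⊤ : ℕ∞) gs₂₂ U)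
    (hk₁ : ContDiffOn ℝ (⊤ : ℕ∞) k₁ U) (hk₂ : ContDiffOn ℝ (⊤ : ℕ∞) k₂ U)
    (hg₁₁pos : ∀ p ∈ U, 0 < g₁₁ p) (hg₂₂pos : ∀ p ∈ U, 0 < g₂₂ p)
    (hgs₁₁pos : ∀ p ∈ U, 0 < gs₁₁ p) (hgs₂₂pos : ∀ p ∈ U, 0 < gs₂₂ p)
    (hne : ∀ p ∈ U, k₁ p - k₂ p ≠ 0)
    (hCod₁ : ∀ p ∈ U, pv k₁ p = (k₂ p - k₁ p) / 2 * pv (fun q => Real.log (g₁₁ q)) p)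
    (hCod₂ : ∀ p ∈ U, pu k₂ p = (k₁ p - k₂ p) / 2 * pu (fun q => Real.log (g₂₂ q)) p)
    (hCod₃ : ∀ p ∈ U, pv k₂ p = (k₁ p - k₂ p) / 2 * pv (fun q => Real.log (gs₁₁ q)) p)
    (hCod₄ : ∀ p ∈ U, pu k₁ p = (k₂ p - k₁ p) / 2 * pu (fun q => Real.log (gs₂₂ q)) p) :
    ∀ p ∈ U,
      pv (fun q => g₁₁ q * gs₁₁ q * (k₁ q - k₂ q) ^ 2) p = 0 ∧
      pu (fun q => g₂₂ q * gs₂₂ q * (k₁ q - k₂ q) ^ 2) p = 0 := by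
  intro p hp
  have hmem := hU.mem_nhds hp
  have D : ∀ f : ℝ × ℝ → ℝ, ContDiffOn ℝ (⊤ : ℕ∞) f U → DifferentiableAt ℝ f p := fun f hf =>
    ((hf.contDiffAt hmem).differentiableAt (by simp))
  constructor
  · exact key g₁₁ gs₁₁ k₁ k₂ p (0,1) (D _ hg₁₁) (D _ hgs₁₁) (D _ hk₁) (D _ hk₂)
      (hg₁₁pos p hp).ne' (hgs₁₁pos p hp).ne' (hne p hp) (hCod₁ p hp) (hCod₃ p hp)
  · have h0 : fderiv ℝ (fun q => g₂₂ q * gs₂₂ q * (k₂ q - k₁ q) ^ 2) p (1,0) = 0 :=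
      key g₂₂ gs₂₂ k₂ k₁ p (1,0) (D _ hg₂₂) (D _ hgs₂₂) (D _ hk₂) (D _ hk₁)
        (hg₂₂pos p hp).ne' (hgs₂₂pos p hp).ne'
        (by simpa [neg_sub] using neg_ne_zero.mpr (hne p hp)) (hCod₂ p hp) (hCod₄ p hp)
    have heq : (fun q => g₂₂ q * gs₂₂ q * (k₂ q - k₁ q) ^ 2)
        = (fun q => g₂₂ q * gs₂₂ q * (k₁ q - k₂ q) ^ 2) := by
      funext q; ring
    rw [heq] at h0
    exact h0
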